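/- Duality principle (Lemma 4.3): For every b ∈ ℝ, every α > 0, and every z ∈ H, setting w = (z−1)/(z+1) one has w ∈ H and W_b(w;α) = W_{1−b}(z;α). In particular W₁((z−1)/(z+1);α) = W₀(z;α) and W₀((z−1)/(z+1);α) = W₁(z;α). -/

import Mathlib

open scoped Real

noncomputable section

/-- The Gaussian energy `W_κ(z;α)`. -/
def latW (κ α : ℝ) (z : ℂ) : ℝ :=
  ∑' p : {p : ℤ × ℤ // p ≠ 0},
    ((1 - κ) * Real.exp (-(α * Real.pi / (2 * z.im)) *
        ‖(p.1.1 : ℂ) * (z + 1) + 2 * (p.1.2 : ℂ)‖ ^ 2)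
      + κ * Real.exp (-(α * Real.pi / z.im) *
        ‖(p.1.1 : ℂ) * z + (p.1.2 : ℂ)‖ ^ 2))

namespace LatWAux

lemma int_sq_summable (d : ℝ) (hd : 0 < d) :
    Summable fun n : ℤ => Real.exp (-d * (n:ℝ)^2) := by
  have hg : Summable fun n : ℤ => Real.exp (-d * |(n:ℝ)|) := by
    have hnat : Summable fun n : ℕ => Real.exp (-d * n) := by
      have := summable_geometric_of_lt_one (Real.exp_pos (-d)).le
        (Real.exp_lt_one_iff.mpr (by linarith))
      refine this.congr fun n => ?_
      rw [← Real.exp_nat_mul]; ring_nf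
    apply Summable.of_nat_of_neg <;> · refine hnat.congr fun n => ?_ ; simp
  have h1 : ∀ n : ℤ, (0:ℝ) ≤ Real.exp (-d * (n:ℝ)^2) := fun n => (Real.exp_pos _).le
  have h2 : ∀ n : ℤ, Real.exp (-d * (n:ℝ)^2) ≤ Real.exp (-d * |(n:ℝ)|) := by
    intro n
    apply Real.exp_le_exp.2
    have h : |(n:ℝ)| ≤ (n:ℝ)^2 := by
      rcases eq_or_ne n 0 with h|h
      · simp [h]
      · have h1 : (1:ℝ) ≤ |(n:ℝ)| := by
          rw [← Int.cast_abs]; exact_mod_cast Int.one_le_abs h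
        nlinarith [sq_abs (n:ℝ)]
    nlinarith
  exact Summable.of_nonneg_of_le h1 h2 hg

set_option maxHeartbeats 2000000 in
lemma quad_summable (c t x y : ℝ) (hc : 0 < c) (ht : 0 < t) (hy : 0 < y) :
    Summable fun p : ℤ × ℤ =>
      Real.exp (-c * (((p.1:ℝ) * x + t * p.2)^2 + (p.1:ℝ)^2 * y^2)) := by
  set K : ℝ := (1 + 2*x^2/t^2)/y^2 + 2/t^2 with hK
  have hK0 : 0 < K := by positivity
  have hg : Summable fun p : ℤ × ℤ =>
      Real.exp (-(c/K) * (p.1:ℝ)^2) * Real.exp (-(c/K) * (p.2:ℝ)^2) :=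
    (int_sq_summable _ (by positivity)).mul_of_nonneg (int_sq_summable _ (by positivity))
      (fun n => (Real.exp_pos _).le) (fun n => (Real.exp_pos _).le)
  have h1 : ∀ p : ℤ × ℤ, (0:ℝ) ≤ Real.exp (-c * (((p.1:ℝ) * x + t * p.2)^2 + (p.1:ℝ)^2 * y^2)) :=
    fun p => (Real.exp_pos _).le
  have h2 : ∀ p : ℤ × ℤ, Real.exp (-c * (((p.1:ℝ) * x + t * p.2)^2 + (p.1:ℝ)^2 * y^2)) ≤
      Real.exp (-(c/K) * (p.1:ℝ)^2) * Real.exp (-(c/K) * (p.2:ℝ)^2) := by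
    intro p
    rw [← Real.exp_add]
    apply Real.exp_le_exp.2
    set M : ℝ := (p.1 : ℝ); set N : ℝ := (p.2 : ℝ)
    have ht2 : 0 < t^2 := by positivity
    have key : M^2 + N^2 ≤ K * ((M * x + t * N)^2 + M^2 * y^2) := by
      have e1 : t^2 * N^2 ≤ 2*(M*x + t*N)^2 + 2*(M*x)^2 := by
        nlinarith [sq_nonneg (M*x + t*N + M*x)]
      have e2 : N^2 ≤ (2/t^2)*(M*x + t*N)^2 + (2/t^2)*(M*x)^2 := by
        rw [div_mul_eq_mul_div, div_mul_eq_mul_div, ← add_div, le_div_iff₀ ht2]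
        nlinarith
      have e3 : M^2 = ((1 + 2*x^2/t^2)/y^2) * (M^2 * y^2) - (2/t^2)*(M*x)^2 := by
        field_simp; ring
      calc M^2 + N^2 ≤ (((1 + 2*x^2/t^2)/y^2) * (M^2 * y^2) - (2/t^2)*(M*x)^2)
            + ((2/t^2)*(M*x + t*N)^2 + (2/t^2)*(M*x)^2) := by linarith [e2, e3.le]
        _ = ((1 + 2*x^2/t^2)/y^2) * (M^2 * y^2) + (2/t^2)*(M*x + t*N)^2 := by ring
        _ ≤ K * ((M * x + t * N)^2 + M^2 * y^2) := by
            rw [hK]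
            have hA : (0:ℝ) ≤ (1 + 2*x^2/t^2)/y^2 := by positivity
            have hB : (0:ℝ) ≤ 2/t^2 := by positivity
            nlinarith [mul_nonneg hA (sq_nonneg (M*x+t*N)),
              mul_nonneg hB (mul_nonneg (sq_nonneg M) (sq_nonneg y))]
    calc -c * ((M * x + t * N)^2 + M^2 * y^2) ≤ -c * ((M^2 + N^2)/K) := by
          apply mul_le_mul_of_nonpos_left _ (by linarith)
          rw [div_le_iff₀ hK0]
          linarith [key]
      _ = -(c/K) * M^2 + -(c/K) * N^2 := by field_simp; ring
  exact Summable.of_nonneg_of_le h1 h2 hg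

lemma abs_sq_one (m n : ℤ) (u : ℂ) :
    ‖(m:ℂ) * u + (n:ℂ)‖ ^ 2 = ((m:ℝ) * u.re + 1 * (n:ℝ))^2 + (m:ℝ)^2 * u.im^2 := by
  rw [Complex.sq_norm, Complex.normSq_apply]
  simp [Complex.add_re, Complex.add_im, Complex.mul_re, Complex.mul_im]
  ring

lemma abs_sq_two (m n : ℤ) (u : ℂ) :
    ‖(m:ℂ) * u + 2 * (n:ℂ)‖ ^ 2 = ((m:ℝ) * u.re + 2 * (n:ℝ))^2 + (m:ℝ)^2 * u.im^2 := by
  rw [Complex.sq_norm, Complex.normSq_apply]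
  simp [Complex.add_re, Complex.add_im, Complex.mul_re, Complex.mul_im]
  ring

lemma summableF (α : ℝ) (hα : 0 < α) (z : ℂ) (hz : 0 < z.im) :
    Summable fun p : ℤ × ℤ => Real.exp (-(α * Real.pi / (2 * z.im)) *
      ‖(p.1 : ℂ) * (z + 1) + 2 * (p.2 : ℂ)‖ ^ 2) := by
  have h := quad_summable (α * Real.pi / (2 * z.im)) 2 (z.re + 1) z.im
    (by positivity) (by norm_num) hz
  refine h.congr fun p => ?_
  rw [abs_sq_two p.1 p.2 (z+1)]
  simp [Complex.add_re, Complex.add_im]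

lemma summableG (α : ℝ) (hα : 0 < α) (z : ℂ) (hz : 0 < z.im) :
    Summable fun p : ℤ × ℤ => Real.exp (-(α * Real.pi / z.im) *
      ‖(p.1 : ℂ) * z + (p.2 : ℂ)‖ ^ 2) := by
  have h := quad_summable (α * Real.pi / z.im) 1 z.re z.im
    (by positivity) (by norm_num) hz
  refine h.congr fun p => ?_
  rw [abs_sq_one p.1 p.2 z]

lemma latW_split (κ α : ℝ) (hα : 0 < α) (z : ℂ) (hz : 0 < z.im) :
    latW κ α z =
      (1 - κ) * ∑' p : {p : ℤ × ℤ // p ≠ 0}, Real.exp (-(α * Real.pi / (2 * z.im)) *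
          ‖(p.1.1 : ℂ) * (z + 1) + 2 * (p.1.2 : ℂ)‖ ^ 2)
      + κ * ∑' p : {p : ℤ × ℤ // p ≠ 0}, Real.exp (-(α * Real.pi / z.im) *
          ‖(p.1.1 : ℂ) * z + (p.1.2 : ℂ)‖ ^ 2) := by
  have hF : Summable (fun p : {p : ℤ × ℤ // p ≠ 0} => Real.exp (-(α * Real.pi / (2 * z.im)) *
      ‖(p.1.1 : ℂ) * (z + 1) + 2 * (p.1.2 : ℂ)‖ ^ 2) ) :=
    (summableF α hα z hz).subtype _
  have hG : Summable (fun p : {p : ℤ × ℤ // p ≠ 0} => Real.exp (-(α * Real.pi / z.im) *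
      ‖(p.1.1 : ℂ) * z + (p.1.2 : ℂ)‖ ^ 2) ) :=
    (summableG α hα z hz).subtype _
  rw [latW, Summable.tsum_add (hF.mul_left _) (hG.mul_left _), tsum_mul_left, tsum_mul_left]

def e1 : ℤ × ℤ ≃ ℤ × ℤ where
  toFun p := (p.1 + p.2, p.2)
  invFun p := (p.1 - p.2, p.2)
  left_inv p := by simp
  right_inv p := by simp

def e2 : ℤ × ℤ ≃ ℤ × ℤ where
  toFun p := (p.1 + p.2, -p.1)
  invFun p := (-p.2, p.1 + p.2)
  left_inv p := by obtain ⟨m,n⟩ := p; simp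
  right_inv p := by obtain ⟨m,n⟩ := p; simp

def E1 : {p : ℤ × ℤ // p ≠ 0} ≃ {p : ℤ × ℤ // p ≠ 0} :=
  e1.subtypeEquiv (fun p => by
    simp only [ne_eq, not_iff_not, e1, Equiv.coe_fn_mk, Prod.ext_iff]
    constructor
    · rintro h; simp [Prod.ext_iff] at h ⊢; omega
    · rintro h; simp [Prod.ext_iff] at h ⊢; omega)

def E2 : {p : ℤ × ℤ // p ≠ 0} ≃ {p : ℤ × ℤ // p ≠ 0} :=
  e2.subtypeEquiv (fun p => by
    simp only [ne_eq, not_iff_not, e2, Equiv.coe_fn_mk, Prod.ext_iff]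
    constructor
    · rintro h; simp [Prod.ext_iff] at h ⊢; omega
    · rintro h; simp [Prod.ext_iff] at h ⊢; omega)

end LatWAux

open LatWAux in
/-- **Duality principle** (Lemma 4.3): under `w = (z−1)/(z+1)` one has `w ∈ H` and
`W_b(w;α) = W_{1−b}(z;α)`; in particular `W₁(w;α) = W₀(z;α)` and `W₀(w;α) = W₁(z;α)`. -/
theorem latW_duality (b α : ℝ) (hα : 0 < α) (z : ℂ) (hz : 0 < z.im) :
    0 < ((z - 1) / (z + 1)).im ∧
    latW b α ((z - 1) / (z + 1)) = latW (1 - b) α z ∧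
    latW 1 α ((z - 1) / (z + 1)) = latW 0 α z ∧
    latW 0 α ((z - 1) / (z + 1)) = latW 1 α z := by
  set w : ℂ := (z - 1) / (z + 1) with hw
  have him1 : (z + 1).im = z.im := by simp
  have hz1 : z + 1 ≠ 0 := fun h => by rw [h] at him1; simp at him1; linarith [him1 ▸ hz]
  have hns : 0 < Complex.normSq (z + 1) := Complex.normSq_pos.mpr hz1
  have hns' : Complex.normSq (z + 1) ≠ 0 := ne_of_gt hns
  have hzim : z.im ≠ 0 := ne_of_gt hz
  have habs : (‖z+1‖)^2 = Complex.normSq (z+1) := Complex.sq_norm _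
  have hwim : w.im = 2 * z.im / Complex.normSq (z + 1) := by
    rw [hw, Complex.div_im]
    simp only [Complex.sub_re, Complex.sub_im, Complex.add_re, Complex.add_im,
      Complex.one_re, Complex.one_im]
    ring
  have hwpos : 0 < w.im := by rw [hwim]; positivity
  have hA : ∀ m n : ℤ, -(α * Real.pi / (2 * w.im)) * ‖(m:ℂ)*(w+1)+2*(n:ℂ)‖^2
      = -(α * Real.pi / z.im) * ‖((m+n:ℤ):ℂ)*z+(n:ℂ)‖^2 := by
    intro m n
    have h1 : (m:ℂ)*(w+1)+2*(n:ℂ) = 2*(((m+n:ℤ):ℂ)*z+(n:ℂ))/(z+1) := by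
      rw [hw]; field_simp; push_cast; ring
    rw [h1, norm_div, norm_mul, Complex.norm_two, div_pow, mul_pow, hwim, habs]
    field_simp
  have hB : ∀ m n : ℤ, -(α * Real.pi / w.im) * ‖(m:ℂ)*w+(n:ℂ)‖^2
      = -(α * Real.pi / (2 * z.im)) * ‖((m+n:ℤ):ℂ)*(z+1)+2*((-m:ℤ):ℂ)‖^2 := by
    intro m n
    have h1 : (m:ℂ)*w+(n:ℂ) = (((m+n:ℤ):ℂ)*(z+1)+2*((-m:ℤ):ℂ))/(z+1) := by
      rw [hw]; field_simp; push_cast; ring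
    rw [h1, norm_div, div_pow, hwim, habs]
    field_simp
  have hSF : (∑' p : {p : ℤ × ℤ // p ≠ 0}, Real.exp (-(α * Real.pi / (2 * w.im)) *
        ‖(p.1.1 : ℂ) * (w + 1) + 2 * (p.1.2 : ℂ)‖ ^ 2))
      = ∑' p : {p : ℤ × ℤ // p ≠ 0}, Real.exp (-(α * Real.pi / z.im) *
        ‖(p.1.1 : ℂ) * z + (p.1.2 : ℂ)‖ ^ 2) := by
    rw [← E1.tsum_eq (fun p : {p : ℤ × ℤ // p ≠ 0} => Real.exp (-(α * Real.pi / z.im) *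
        ‖(p.1.1 : ℂ) * z + (p.1.2 : ℂ)‖ ^ 2))]
    refine tsum_congr fun p => ?_
    obtain ⟨⟨m, n⟩, hp⟩ := p
    simp only [E1, e1, Equiv.subtypeEquiv_apply, Equiv.coe_fn_mk]
    exact congrArg Real.exp (hA m n)
  have hSG : (∑' p : {p : ℤ × ℤ // p ≠ 0}, Real.exp (-(α * Real.pi / w.im) *
        ‖(p.1.1 : ℂ) * w + (p.1.2 : ℂ)‖ ^ 2))
      = ∑' p : {p : ℤ × ℤ // p ≠ 0}, Real.exp (-(α * Real.pi / (2 * z.im)) *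
        ‖(p.1.1 : ℂ) * (z + 1) + 2 * (p.1.2 : ℂ)‖ ^ 2) := by
    rw [← E2.tsum_eq (fun p : {p : ℤ × ℤ // p ≠ 0} => Real.exp (-(α * Real.pi / (2 * z.im)) *
        ‖(p.1.1 : ℂ) * (z + 1) + 2 * (p.1.2 : ℂ)‖ ^ 2))]
    refine tsum_congr fun p => ?_
    obtain ⟨⟨m, n⟩, hp⟩ := p
    simp only [E2, e2, Equiv.subtypeEquiv_apply, Equiv.coe_fn_mk]
    exact congrArg Real.exp (hB m n)
  have key : ∀ κ : ℝ, latW κ α w = latW (1 - κ) α z := by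
    intro κ
    rw [latW_split κ α hα w hwpos, latW_split (1-κ) α hα z hz, hSF, hSG]
    ring
  refine ⟨hwpos, key b, ?_, ?_⟩
  · have := key 1; norm_num at this ⊢; exact this
  · have := key 0; norm_num at this ⊢; exact this
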